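/- arXiv:1912.03090 — 2 statements merged into one kernel-verified Lean document; each statement's English description precedes it below -/
import Mathlib

section
/- Let m ∈ ℕ₀ and η > 2m+1. Then the function g_η(x) = √(ψ'(x,η)) with ψ'(x,η) = 4η(1−4x²)^{η−1}/((1+2x)^η+(1−2x)^η)² (the square root of the derivative of the logarithmic transformation) is m-times continuously differentiable on [−1/2,1/2] and its derivatives g_η^{(j)} for j = 0,1,…,m all tend to 0 as x → ±1/2. -/
open Set Filter

/-- Derivative of the logarithmic transformation:
`ψ'(x,η) = 4η(1-4x²)^{η-1} / ((1+2x)^η + (1-2x)^η)²`. -/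
noncomputable def logTrafoDeriv (x η : ℝ) : ℝ :=
  4 * η * (1 - 4*x^2) ^ (η - 1) / ((1 + 2*x) ^ η + (1 - 2*x) ^ η) ^ 2

/-- positivity of the sum of two rpows. -/
lemma st13_aux_pos {η a b : ℝ} (hη0 : 0 < η) (h1a : 1 ≤ a) (hb1 : -1 < b) (hb2 : b ≤ 1) :
    0 < a ^ η + b ^ η := by
  have ha : (1:ℝ) ≤ a ^ η := by
    calc (1:ℝ) = 1 ^ η := (Real.one_rpow η).symm
    _ ≤ a ^ η := Real.rpow_le_rpow zero_le_one h1a hη0.le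
  rcases eq_or_lt_of_le hb2 with rfl | hb2'
  · rw [Real.one_rpow]; linarith
  · have habs : |b| < 1 := abs_lt.mpr ⟨hb1, hb2'⟩
    have h1 : |b ^ η| ≤ |b| ^ η := Real.abs_rpow_le_abs_rpow b η
    have h2 : |b| ^ η < 1 := Real.rpow_lt_one (abs_nonneg b) habs hη0
    have h3 : -(|b ^ η|) ≤ b ^ η := neg_abs_le _
    linarith

/-- The denominator is positive on `(-1,1)`. -/
lemma st13_D_pos {η : ℝ} (hη0 : 0 < η) {x : ℝ} (hx : x ∈ Ioo (-1:ℝ) 1) :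
    0 < (1 + 2*x) ^ η + (1 - 2*x) ^ η := by
  obtain ⟨hx1, hx2⟩ := hx
  rcases le_total 0 x with hx0 | hx0
  · exact st13_aux_pos hη0 (by linarith) (by linarith) (by linarith)
  · have := st13_aux_pos hη0 (show (1:ℝ) ≤ 1 - 2*x by linarith)
      (show (-1:ℝ) < 1 + 2*x by linarith) (show (1:ℝ) + 2*x ≤ 1 by linarith)
    linarith

/-- `iteratedDerivWithin` agrees with `iteratedDeriv` when the set is a neighborhood. -/
lemma st13_idw (n : ℕ) (f : ℝ → ℝ) (s : Set ℝ) {x : ℝ} (h : s ∈ nhds x) :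
    iteratedDerivWithin n f s x = iteratedDeriv n f x := by
  have h2 : iteratedFDerivWithin ℝ n f (univ ∩ s) x = iteratedFDerivWithin ℝ n f univ x :=
    iteratedFDerivWithin_inter h
  rw [univ_inter] at h2
  simp [iteratedDerivWithin, iteratedDeriv, h2, iteratedFDerivWithin_univ]

/-- The denominator is `C^m` (globally). -/
lemma st13_D_cd (m : ℕ) {η : ℝ} (hmη : (m:ℝ) ≤ η) :
    ContDiff ℝ m (fun x : ℝ => (1 + 2*x) ^ η + (1 - 2*x) ^ η) := by
  have h1 : ContDiff ℝ m (fun x : ℝ => 1 + 2*x) :=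
    contDiff_const.add (contDiff_const.mul contDiff_id)
  have h2 : ContDiff ℝ m (fun x : ℝ => 1 - 2*x) :=
    contDiff_const.sub (contDiff_const.mul contDiff_id)
  exact ((Real.contDiff_rpow_const_of_le hmη).comp h1).add
    ((Real.contDiff_rpow_const_of_le hmη).comp h2)

/-- Structure of the iterated derivatives of `F` on `(-1/2,1/2)`. -/
lemma st13_key (m : ℕ) {η : ℝ} (hη : 2 * (m : ℝ) + 1 < η) (j : ℕ) (hj : j ≤ m) :
    ∃ h : ℝ → ℝ, ContDiffOn ℝ ((m - j : ℕ)) h (Ioo (-1:ℝ) 1) ∧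
      ∀ x ∈ Ioo (-(1/2):ℝ) (1/2),
        iteratedDeriv j (fun y : ℝ => Real.sqrt (4*η) *
            ((1 - 2*y) ^ ((η-1)/2) * (1 + 2*y) ^ ((η-1)/2)) /
            ((1 + 2*y) ^ η + (1 - 2*y) ^ η)) x
          = (1 - 4*x^2) ^ ((η-1)/2 - j) * h x := by
  have hm0 : (0:ℝ) ≤ m := Nat.cast_nonneg m
  have hη0 : (0:ℝ) < η := by linarith
  have hmη : (m:ℝ) ≤ η := by linarith
  have hDcd : ContDiff ℝ m (fun x : ℝ => (1 + 2*x) ^ η + (1 - 2*x) ^ η) := st13_D_cd m hmη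
  induction j with
  | zero =>
    refine ⟨fun x => Real.sqrt (4*η) / ((1 + 2*x) ^ η + (1 - 2*x) ^ η), ?_, ?_⟩
    · refine contDiffOn_const.div (hDcd.contDiffOn.of_le ?_)
        (fun x hx => (st13_D_pos hη0 hx).ne')
      exact_mod_cast Nat.sub_le m 0
    · intro x hx
      have h1 : (0:ℝ) ≤ 1 - 2*x := by linarith [hx.2]
      have h2 : (0:ℝ) ≤ 1 + 2*x := by linarith [hx.1]
      rw [iteratedDeriv_zero, ← Real.mul_rpow h1 h2,
        show (1 - 2*x) * (1 + 2*x) = 1 - 4*x^2 by ring]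
      rw [Nat.cast_zero, sub_zero]
      ring
  | succ j IH =>
    obtain ⟨h, hcd, heq⟩ := IH (Nat.le_of_succ_le hj)
    have hsub1 : ((m - (j+1) : ℕ) : WithTop ℕ∞) + 1 ≤ ((m - j : ℕ) : WithTop ℕ∞) := by
      exact_mod_cast (by omega : m - (j+1) + 1 ≤ m - j)
    have hderiv : ContDiffOn ℝ ((m - (j+1) : ℕ)) (deriv h) (Ioo (-1:ℝ) 1) :=
      hcd.deriv_of_isOpen isOpen_Ioo hsub1
    have hle : ((m - (j+1) : ℕ) : WithTop ℕ∞) ≤ ((m - j : ℕ) : WithTop ℕ∞) := by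
      exact_mod_cast (by omega : m - (j+1) ≤ m - j)
    refine ⟨fun y => (((η-1)/2) - j) * (-8*y) * h y + (1 - 4*y^2) * deriv h y, ?_, ?_⟩
    · refine ContDiffOn.add ?_ ?_
      · exact (contDiff_const.mul (contDiff_const.mul contDiff_id)).contDiffOn.mul
          (hcd.of_le hle)
      · exact (contDiff_const.sub (contDiff_const.mul (contDiff_id.pow 2))).contDiffOn.mul hderiv
    · intro x hx
      have hxU : x ∈ Ioo (-1:ℝ) 1 := ⟨by linarith [hx.1], by linarith [hx.2]⟩
      have hpos : (0:ℝ) < 1 - 4*x^2 := by nlinarith [hx.1, hx.2]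
      rw [iteratedDeriv_succ]
      have hev : iteratedDeriv j (fun y : ℝ => Real.sqrt (4*η) *
            ((1 - 2*y) ^ ((η-1)/2) * (1 + 2*y) ^ ((η-1)/2)) /
            ((1 + 2*y) ^ η + (1 - 2*y) ^ η))
          =ᶠ[nhds x] fun y => (1 - 4*y^2) ^ ((η-1)/2 - j) * h y := by
        filter_upwards [isOpen_Ioo.mem_nhds hx] with y hy using heq y hy
      rw [hev.deriv_eq]
      have hu : HasDerivAt (fun y : ℝ => 1 - 4*y^2) (-8*x) x := by
        have h1 : HasDerivAt (fun y : ℝ => 1 - 4*y^2) _ x := (hasDerivAt_const x (1:ℝ)).sub ((hasDerivAt_pow 2 x).const_mul (4:ℝ))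
        convert h1 using 1
        push_cast
        ring
      have h1 : HasDerivAt (fun y : ℝ => (1 - 4*y^2) ^ ((η-1)/2 - (j:ℝ)))
          (-8*x * ((η-1)/2 - (j:ℝ)) * (1 - 4*x^2) ^ ((η-1)/2 - (j:ℝ) - 1)) x :=
        hu.rpow_const (Or.inl hpos.ne')
      have hdiff : DifferentiableAt ℝ h x := by
        have h1n : ((m - j : ℕ) : WithTop ℕ∞) ≠ 0 := by
          exact_mod_cast (by omega : m - j ≠ 0)
        exact ((hcd.differentiableOn h1n) x hxU).differentiableAt (isOpen_Ioo.mem_nhds hxU)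
      have hprod : HasDerivAt (fun y => (1 - 4*y^2) ^ ((η-1)/2 - (j:ℝ)) * h y) _ x :=
        h1.mul hdiff.hasDerivAt
      rw [hprod.deriv]
      have hsplit : (1 - 4*x^2) ^ ((η-1)/2 - (j:ℝ)) =
          (1 - 4*x^2) ^ ((η-1)/2 - (j:ℝ) - 1) * (1 - 4*x^2) := by
        have h5 := Real.rpow_add_one hpos.ne' ((η-1)/2 - (j:ℝ) - 1)
        rw [show (η-1)/2 - (j:ℝ) - 1 + 1 = (η-1)/2 - (j:ℝ) from by ring] at h5
        exact h5
      have hc : ((η-1)/2 - ((j+1 : ℕ) : ℝ)) = ((η-1)/2 - (j:ℝ) - 1) := by push_cast; ring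
      rw [hc, hsplit]
      ring

/-- The punctured limit at a boundary point. -/
lemma st13_tendsto_zero (φ ψ : ℝ → ℝ) {c : ℝ} {β : ℝ} (hβ : 0 < β)
    (hc : c = 1/2 ∨ c = -(1/2))
    (hψ : ContinuousAt ψ c)
    (hfe : ∀ x ∈ Ioo (-(1/2):ℝ) (1/2), φ x = (1 - 4*x^2) ^ β * ψ x) :
    Tendsto φ (nhdsWithin c (Icc (-(1/2):ℝ) (1/2) \ {c})) (nhds 0) := by
  have hb : Tendsto (fun x : ℝ => 1 - 4*x^2) (nhds c) (nhds 0) := by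
    have hcont : ContinuousAt (fun x : ℝ => 1 - 4*x^2) c := by fun_prop
    have : (1 : ℝ) - 4*c^2 = 0 := by rcases hc with rfl | rfl <;> norm_num
    simpa [ContinuousAt, this] using hcont
  have hr : Tendsto (fun x : ℝ => (1 - 4*x^2) ^ β) (nhds c) (nhds 0) := by
    have hca : ContinuousAt (fun t : ℝ => t ^ β) 0 :=
      Real.continuousAt_rpow_const 0 β (Or.inr hβ.le)
    have := hca.tendsto.comp hb
    simpa [Real.zero_rpow hβ.ne', Function.comp_def] using this
  have h1 : Tendsto (fun x : ℝ => (1 - 4*x^2) ^ β * ψ x) (nhds c) (nhds 0) := by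
    simpa using hr.mul hψ.tendsto
  have h2 : Tendsto (fun x : ℝ => (1 - 4*x^2) ^ β * ψ x)
      (nhdsWithin c (Icc (-(1/2):ℝ) (1/2) \ {c})) (nhds 0) := h1.mono_left nhdsWithin_le_nhds
  refine h2.congr' ?_
  have hball : ∀ᶠ x in nhdsWithin c (Icc (-(1/2):ℝ) (1/2) \ {c}), |x - c| < 1/2 := by
    apply eventually_nhdsWithin_of_eventually_nhds
    exact eventually_abs_sub_lt c (by norm_num)
  have hmem : ∀ᶠ x in nhdsWithin c (Icc (-(1/2):ℝ) (1/2) \ {c}),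
      x ∈ Icc (-(1/2):ℝ) (1/2) \ {c} := eventually_mem_nhdsWithin
  filter_upwards [hball, hmem] with x h1x h2x
  have hxV : x ∈ Ioo (-(1/2):ℝ) (1/2) := by
    obtain ⟨⟨ha, hb'⟩, hne⟩ := h2x
    have hne' : x ≠ c := by simpa using hne
    rcases hc with rfl | rfl
    · constructor
      · have := abs_lt.mp h1x; linarith [this.1]
      · exact lt_of_le_of_ne hb' hne'
    · constructor
      · exact lt_of_le_of_ne ha (Ne.symm hne')
      · have := abs_lt.mp h1x; linarith [this.2]
  exact (hfe x hxV).symm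

/-- For `m ∈ ℕ₀` and `η > 2m+1`, the function `g_η = √(ψ'(·,η))` is `m`-times
continuously differentiable on `[-1/2,1/2]` and all derivatives up to order `m` tend to `0`
at the boundary points `±1/2`. -/
theorem statement13 (m : ℕ) (η : ℝ) (hη : 2 * (m : ℝ) + 1 < η) :
    ContDiffOn ℝ m (fun x : ℝ => Real.sqrt (logTrafoDeriv x η)) (Icc (-(1/2) : ℝ) (1/2)) ∧
    (∀ j : ℕ, j ≤ m →
      Tendsto
        (iteratedDerivWithin j (fun x : ℝ => Real.sqrt (logTrafoDeriv x η))
          (Icc (-(1/2) : ℝ) (1/2)))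
        (nhdsWithin (1/2 : ℝ) (Icc (-(1/2) : ℝ) (1/2))) (nhds 0) ∧
      Tendsto
        (iteratedDerivWithin j (fun x : ℝ => Real.sqrt (logTrafoDeriv x η))
          (Icc (-(1/2) : ℝ) (1/2)))
        (nhdsWithin (-(1/2) : ℝ) (Icc (-(1/2) : ℝ) (1/2))) (nhds 0)) := by
  have hm0 : (0:ℝ) ≤ m := Nat.cast_nonneg m
  have hη0 : (0:ℝ) < η := by linarith
  have hη1 : (1:ℝ) < η := by linarith
  have hmη : (m:ℝ) ≤ η := by linarith
  have hmα : (m:ℝ) ≤ (η-1)/2 := by linarith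
  set g : ℝ → ℝ := fun x => Real.sqrt (logTrafoDeriv x η) with hg
  set F : ℝ → ℝ := fun y : ℝ => Real.sqrt (4*η) *
      ((1 - 2*y) ^ ((η-1)/2) * (1 + 2*y) ^ ((η-1)/2)) /
      ((1 + 2*y) ^ η + (1 - 2*y) ^ η) with hF
  set S : Set ℝ := Icc (-(1/2):ℝ) (1/2) with hS
  have hSsubU : S ⊆ Ioo (-1:ℝ) 1 := fun x hx => ⟨by linarith [hx.1], by linarith [hx.2]⟩
  -- F is C^m on (-1,1)
  have hFcd : ContDiffOn ℝ m F (Ioo (-1:ℝ) 1) := by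
    have haff1 : ContDiff ℝ m (fun x : ℝ => 1 - 2*x) :=
      contDiff_const.sub (contDiff_const.mul contDiff_id)
    have haff2 : ContDiff ℝ m (fun x : ℝ => 1 + 2*x) :=
      contDiff_const.add (contDiff_const.mul contDiff_id)
    have hN : ContDiff ℝ m (fun x : ℝ => Real.sqrt (4*η) *
        ((1 - 2*x) ^ ((η-1)/2) * (1 + 2*x) ^ ((η-1)/2))) :=
      contDiff_const.mul (((Real.contDiff_rpow_const_of_le hmα).comp haff1).mul
        ((Real.contDiff_rpow_const_of_le hmα).comp haff2))
    exact hN.contDiffOn.div ((st13_D_cd m hmη).contDiffOn)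
      (fun x hx => (st13_D_pos hη0 hx).ne')
  -- g = F on S
  have hgF : ∀ x ∈ S, g x = F x := by
    intro x hx
    have h1 : (0:ℝ) ≤ 1 - 2*x := by linarith [hx.2]
    have h2 : (0:ℝ) ≤ 1 + 2*x := by linarith [hx.1]
    have hb : (0:ℝ) ≤ 1 - 4*x^2 := by nlinarith
    have hD0 : 0 < (1 + 2*x) ^ η + (1 - 2*x) ^ η := st13_D_pos hη0 (hSsubU hx)
    have hnum : (0:ℝ) ≤ 4 * η * (1 - 4*x^2) ^ (η - 1) :=
      mul_nonneg (by positivity) (Real.rpow_nonneg hb _)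
    show Real.sqrt (logTrafoDeriv x η) = _
    rw [logTrafoDeriv, Real.sqrt_div hnum, Real.sqrt_sq hD0.le,
      Real.sqrt_mul (by positivity : (0:ℝ) ≤ 4*η)]
    congr 1
    rw [Real.sqrt_eq_rpow ((1 - 4*x^2) ^ (η-1)), ← Real.rpow_mul hb, ← Real.mul_rpow h1 h2,
      show (1 - 2*x) * (1 + 2*x) = 1 - 4*x^2 by ring]
    congr 1
    ring
  have hFS : ContDiffOn ℝ m F S := hFcd.mono hSsubU
  have part1 : ContDiffOn ℝ m g S := hFS.congr hgF
  refine ⟨part1, ?_⟩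
  intro j hj
  have hUD : UniqueDiffOn ℝ S := uniqueDiffOn_Icc (by norm_num)
  have hcont : ContinuousOn (iteratedDerivWithin j g S) S :=
    part1.continuousOn_iteratedDerivWithin (by exact_mod_cast hj) hUD
  obtain ⟨h, hcd, heq⟩ := st13_key m hη j hj
  have hβ : (0:ℝ) < (η-1)/2 - j := by
    have : (j:ℝ) ≤ m := by exact_mod_cast hj
    linarith
  -- value of iteratedDerivWithin on the open interval
  have hfe : ∀ x ∈ Ioo (-(1/2):ℝ) (1/2),
      iteratedDerivWithin j g S x = (1 - 4*x^2) ^ ((η-1)/2 - j) * h x := by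
    intro x hx
    have hxS : x ∈ S := ⟨hx.1.le, hx.2.le⟩
    have hSmem : S ∈ nhds x := Icc_mem_nhds hx.1 hx.2
    calc iteratedDerivWithin j g S x = iteratedDerivWithin j F S x :=
          iteratedDerivWithin_congr hgF hxS
      _ = iteratedDeriv j F x := st13_idw j F S hSmem
      _ = (1 - 4*x^2) ^ ((η-1)/2 - j) * h x := heq x hx
  have hmain : ∀ c : ℝ, c = 1/2 ∨ c = -(1/2) →
      Tendsto (iteratedDerivWithin j g S) (nhdsWithin c S) (nhds 0) := by
    intro c hcor
    have hcS : c ∈ S := by rcases hcor with rfl | rfl <;> constructor <;> norm_num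
    have hcU : c ∈ Ioo (-1:ℝ) 1 := hSsubU hcS
    have hψ : ContinuousAt h c :=
      (hcd.continuousOn c hcU).continuousAt (isOpen_Ioo.mem_nhds hcU)
    have hpunct : Tendsto (iteratedDerivWithin j g S)
        (nhdsWithin c (S \ {c})) (nhds 0) :=
      st13_tendsto_zero _ h hβ hcor hψ hfe
    have hwc : Tendsto (iteratedDerivWithin j g S) (nhdsWithin c S)
        (nhds (iteratedDerivWithin j g S c)) := hcont c hcS
    have hne : (nhdsWithin c (S \ {c})).NeBot := by
      have hsub : Ioo (-(1/2):ℝ) (1/2) ⊆ S \ {c} := by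
        intro x hx
        refine ⟨⟨hx.1.le, hx.2.le⟩, ?_⟩
        simp only [mem_singleton_iff]
        rcases hcor with rfl | rfl
        · exact hx.2.ne
        · exact hx.1.ne'
      have hltc : (-(1/2):ℝ) < 1/2 := by norm_num
      have hIoo : (nhdsWithin c (Ioo (-(1/2):ℝ) (1/2))).NeBot := by
        rcases hcor with rfl | rfl
        · exact right_nhdsWithin_Ioo_neBot hltc
        · exact left_nhdsWithin_Ioo_neBot hltc
      exact hIoo.mono (nhdsWithin_mono c hsub)
    have hc0 : iteratedDerivWithin j g S c = 0 :=
      tendsto_nhds_unique (hwc.mono_left (nhdsWithin_mono c diff_subset)) hpunct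
    rwa [hc0] at hwc
  exact ⟨hmain (1/2) (Or.inl rfl), hmain (-(1/2)) (Or.inr rfl)⟩
end

section
/- Let ψ be a C^m torus-to-cube transformation on [−1/2,1/2], ω an integrable weight, h ∈ C^m([−1/2,1/2]), and suppose the function g = √((ω∘ψ)·ψ') satisfies g^{(n)} ∈ C₀([−1/2,1/2]) for all n = 0,…,m. Then the transformed function f(x) = h(ψ(x)) g(x) is m-times continuously differentiable on [−1/2,1/2] and f^{(n)}(±1/2) = 0 for n = 0,…,m; in particular f extends to an m-times continuously differentiable 1-periodic function on the torus, hence f ∈ H^m(𝕋). -/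
open Set Finset

theorem st14_leibniz {s : Set ℝ} (hs : UniqueDiffOn ℝ s) (u v : ℝ → ℝ) (m : ℕ)
    (hu : ContDiffOn ℝ m u s) (hv : ContDiffOn ℝ m v s) :
    ∀ n : ℕ, n ≤ m → ∀ x ∈ s,
      iteratedDerivWithin n (fun y => u y * v y) s x =
        ∑ i ∈ Finset.range (n + 1), (n.choose i : ℝ) *
          (iteratedDerivWithin i u s x * iteratedDerivWithin (n - i) v s x) := by
  intro n
  induction n with
  | zero =>
    intro _ x hx
    simp [iteratedDerivWithin_zero]
  | succ n ih =>
    intro hn x hx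
    have hn' : n ≤ m := by omega
    rw [iteratedDerivWithin_succ]
    have hcongr : derivWithin (iteratedDerivWithin n (fun y => u y * v y) s) s x =
        derivWithin (fun y => ∑ i ∈ Finset.range (n + 1), (n.choose i : ℝ) *
          (iteratedDerivWithin i u s y * iteratedDerivWithin (n - i) v s y)) s x :=
      derivWithin_congr (fun y hy => ih hn' y hy) (ih hn' x hx)
    rw [hcongr]
    have hterm : ∀ i ∈ Finset.range (n + 1), HasDerivWithinAt
        (fun y => (n.choose i : ℝ) *
          (iteratedDerivWithin i u s y * iteratedDerivWithin (n - i) v s y))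
        ((n.choose i : ℝ) *
          (iteratedDerivWithin (i + 1) u s x * iteratedDerivWithin (n - i) v s x +
           iteratedDerivWithin i u s x * iteratedDerivWithin (n - i + 1) v s x)) s x := by
      intro i hi
      have hiu : (i : WithTop ℕ∞) < (m : WithTop ℕ∞) := by
        simp only [Finset.mem_range] at hi
        exact_mod_cast (by omega : i < m)
      have hiv : ((n - i : ℕ) : WithTop ℕ∞) < (m : WithTop ℕ∞) := by
        exact_mod_cast (by omega : n - i < m)
      have Hu : HasDerivWithinAt (iteratedDerivWithin i u s)
          (iteratedDerivWithin (i + 1) u s x) s x := by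
        rw [iteratedDerivWithin_succ]
        exact ((hu.differentiableOn_iteratedDerivWithin hiu hs) x hx).hasDerivWithinAt
      have Hv : HasDerivWithinAt (iteratedDerivWithin (n - i) v s)
          (iteratedDerivWithin (n - i + 1) v s x) s x := by
        rw [iteratedDerivWithin_succ]
        exact ((hv.differentiableOn_iteratedDerivWithin hiv hs) x hx).hasDerivWithinAt
      exact (Hu.mul Hv).const_mul _
    have hsum := HasDerivWithinAt.fun_sum hterm
    rw [hsum.derivWithin (hs x hx)]
    have expand := Finset.sum_choose_succ_mul
      (fun i j => iteratedDerivWithin i u s x * iteratedDerivWithin j v s x) n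
    rw [expand]
    rw [← Finset.sum_add_distrib]
    apply Finset.sum_congr rfl
    intro i hi
    simp only [Finset.mem_range] at hi
    have : n + 1 - i = n - i + 1 := by omega
    rw [this]
    ring

open Set

theorem st14_extend {a b : ℝ} (hab : a < b) (m : ℕ) (f : ℝ → ℝ)
    (hf : ContDiffOn ℝ m f (Icc a b))
    (h0 : ∀ n : ℕ, n ≤ m → iteratedDerivWithin n f (Icc a b) a = 0 ∧
      iteratedDerivWithin n f (Icc a b) b = 0) :
    ContDiff ℝ m (fun x => if x ∈ Icc a b then f x else 0) := by
  have hsU : UniqueDiffOn ℝ (Icc a b) := uniqueDiffOn_Icc hab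
  set G : ℕ → ℝ → ℝ :=
    fun n x => if x ∈ Icc a b then iteratedDerivWithin n f (Icc a b) x else 0 with hG
  -- endpoint analysis, symmetric helper facts
  have hma : a ∈ Icc a b := ⟨le_rfl, hab.le⟩
  have hmb : b ∈ Icc a b := ⟨hab.le, le_rfl⟩
  -- membership of Icc in one-sided neighborhoods
  have hIci : Icc a b ∈ nhdsWithin a (Ici a) := Icc_mem_nhdsGE hab
  have hIic : Icc a b ∈ nhdsWithin b (Iic b) := Icc_mem_nhdsLE hab
  have hGeq : ∀ n, ∀ x ∈ Icc a b, G n x = iteratedDerivWithin n f (Icc a b) x :=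
    fun n x hx => if_pos hx
  have hGa : ∀ n, n ≤ m → EqOn (G n) (fun _ => (0:ℝ)) (Iic a) := by
    intro n hn y hy
    by_cases hyI : y ∈ Icc a b
    · have hya : y = a := le_antisymm hy hyI.1
      subst hya
      simp [hG, hyI, (h0 n hn).1]
    · simp only [hG, if_neg hyI]
  have hGb : ∀ n, n ≤ m → EqOn (G n) (fun _ => (0:ℝ)) (Ici b) := by
    intro n hn y hy
    by_cases hyI : y ∈ Icc a b
    · have hyb : y = b := le_antisymm hyI.2 hy
      subst hyb
      simp [hG, hyI, (h0 n hn).2]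
    · simp only [hG, if_neg hyI]
  -- continuity
  have key_cont : ∀ n, n ≤ m → Continuous (G n) := by
    intro n hn
    have hcont : ContinuousOn (iteratedDerivWithin n f (Icc a b)) (Icc a b) :=
      hf.continuousOn_iteratedDerivWithin (by exact_mod_cast hn) hsU
    rw [continuous_iff_continuousAt]
    intro x
    rcases lt_trichotomy x a with hx | hx | hx
    · have hmem : (Icc a b)ᶜ ∈ nhds x :=
        (isClosed_Icc.isOpen_compl).mem_nhds (by simp [hx.not_ge])
      have : G n =ᶠ[nhds x] fun _ => (0:ℝ) :=
        Filter.eventually_of_mem hmem (fun y hy => if_neg hy)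
      exact (continuousAt_const (y := (0:ℝ))).congr this.symm
    · -- x = a
      subst hx
      rw [← continuousWithinAt_univ, ← Iic_union_Ici (a := x)]
      apply ContinuousWithinAt.union
      · exact continuousWithinAt_const.congr (hGa n hn)
          (hGa n hn (le_refl x))
      · have h1 : ContinuousWithinAt (iteratedDerivWithin n f (Icc x b)) (Ici x) x :=
          (hcont x hma).mono_of_mem_nhdsWithin hIci
        exact h1.congr_of_eventuallyEq
          (Filter.eventually_of_mem hIci (fun y hy => hGeq n y hy)) (hGeq n x hma)
    · rcases lt_trichotomy x b with hx' | hx' | hx'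
      · have hmem : Icc a b ∈ nhds x := Icc_mem_nhds hx hx'
        have h1 : ContinuousAt (iteratedDerivWithin n f (Icc a b)) x :=
          (hcont x ⟨hx.le, hx'.le⟩).continuousAt hmem
        exact h1.congr (Filter.eventually_of_mem hmem (fun y hy => (hGeq n y hy).symm))
      · subst hx'
        rw [← continuousWithinAt_univ, ← Iic_union_Ici (a := x)]
        apply ContinuousWithinAt.union
        · have h1 : ContinuousWithinAt (iteratedDerivWithin n f (Icc a x)) (Iic x) x :=
            (hcont x hmb).mono_of_mem_nhdsWithin hIic
          exact h1.congr_of_eventuallyEq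
            (Filter.eventually_of_mem hIic (fun y hy => hGeq n y hy)) (hGeq n x hmb)
        · exact continuousWithinAt_const.congr (hGb n hn)
            (hGb n hn (le_refl x))
      · have hmem : (Icc a b)ᶜ ∈ nhds x :=
          (isClosed_Icc.isOpen_compl).mem_nhds (by simp [hx'.not_ge, hx'])
        have : G n =ᶠ[nhds x] fun _ => (0:ℝ) :=
          Filter.eventually_of_mem hmem (fun y hy => if_neg hy)
        exact (continuousAt_const (y := (0:ℝ))).congr this.symm
  -- differentiability
  have key_deriv : ∀ n, n + 1 ≤ m → ∀ x, HasDerivAt (G n) (G (n + 1) x) x := by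
    intro n hn x
    have hlt : (n : WithTop ℕ∞) < (m : WithTop ℕ∞) := by exact_mod_cast (by omega : n < m)
    have hdiff : ∀ y ∈ Icc a b, HasDerivWithinAt (iteratedDerivWithin n f (Icc a b))
        (iteratedDerivWithin (n + 1) f (Icc a b) y) (Icc a b) y := by
      intro y hy
      rw [iteratedDerivWithin_succ]
      exact ((hf.differentiableOn_iteratedDerivWithin hlt hsU) y hy).hasDerivWithinAt
    rcases lt_trichotomy x a with hx | hx | hx
    · have hmem : (Icc a b)ᶜ ∈ nhds x :=
        (isClosed_Icc.isOpen_compl).mem_nhds (by simp [hx.not_ge])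
      have hxn : x ∉ Icc a b := by simp [hx.not_ge]
      have h1 : HasDerivAt (G n) 0 x :=
        (hasDerivAt_const x (0:ℝ)).congr_of_eventuallyEq
          (Filter.eventually_of_mem hmem (fun y hy => if_neg hy))
      have e : G (n + 1) x = 0 := if_neg hxn
      rw [e]; exact h1
    · subst hx
      have hval : G (n + 1) x = 0 := by
        simp only [hG, if_pos hma, (h0 (n + 1) hn).1]
      rw [hval]
      rw [← hasDerivWithinAt_univ, ← Iic_union_Ici (a := x)]
      apply HasDerivWithinAt.union
      · exact (hasDerivWithinAt_const x (Iic x) (0:ℝ)).congr (hGa n (by omega))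
          (hGa n (by omega) (le_refl x))
      · have h1 : HasDerivWithinAt (iteratedDerivWithin n f (Icc x b))
            (iteratedDerivWithin (n + 1) f (Icc x b) x) (Ici x) x :=
          (hdiff x hma).mono_of_mem_nhdsWithin hIci
        have h2 := h1.congr_of_eventuallyEq
          (Filter.eventually_of_mem hIci (fun y hy => hGeq n y hy)) (hGeq n x hma)
        rwa [(h0 (n + 1) hn).1] at h2
    · rcases lt_trichotomy x b with hx' | hx' | hx'
      · have hmem : Icc a b ∈ nhds x := Icc_mem_nhds hx hx'
        have hxI : x ∈ Icc a b := ⟨hx.le, hx'.le⟩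
        have h1 : HasDerivAt (iteratedDerivWithin n f (Icc a b))
            (iteratedDerivWithin (n + 1) f (Icc a b) x) x :=
          (hdiff x hxI).hasDerivAt hmem
        have h2 := h1.congr_of_eventuallyEq
          (Filter.eventually_of_mem hmem (fun y hy => hGeq n y hy))
        rw [hGeq (n + 1) x hxI]; exact h2
      · subst hx'
        have hval : G (n + 1) x = 0 := by
          simp only [hG, if_pos hmb, (h0 (n + 1) hn).2]
        rw [hval]
        rw [← hasDerivWithinAt_univ, ← Iic_union_Ici (a := x)]
        apply HasDerivWithinAt.union
        · have h1 : HasDerivWithinAt (iteratedDerivWithin n f (Icc a x))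
              (iteratedDerivWithin (n + 1) f (Icc a x) x) (Iic x) x :=
            (hdiff x hmb).mono_of_mem_nhdsWithin hIic
          have h2 := h1.congr_of_eventuallyEq
            (Filter.eventually_of_mem hIic (fun y hy => hGeq n y hy)) (hGeq n x hmb)
          rwa [(h0 (n + 1) hn).2] at h2
        · exact (hasDerivWithinAt_const x (Ici x) (0:ℝ)).congr (hGb n (by omega))
            (hGb n (by omega) (le_refl x))
      · have hmem : (Icc a b)ᶜ ∈ nhds x :=
          (isClosed_Icc.isOpen_compl).mem_nhds (by simp [hx'.not_ge])
        have hxn : x ∉ Icc a b := by simp [hx'.not_ge]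
        have h1 : HasDerivAt (G n) 0 x :=
          (hasDerivAt_const x (0:ℝ)).congr_of_eventuallyEq
            (Filter.eventually_of_mem hmem (fun y hy => if_neg hy))
        have e : G (n + 1) x = 0 := if_neg hxn
        rw [e]; exact h1
  -- assembly
  have main : ∀ j n : ℕ, n + j ≤ m → ContDiff ℝ (j : ℕ) (G n) := by
    intro j
    induction j with
    | zero =>
      intro n hn
      rw [show ((0 : ℕ) : WithTop ℕ∞) = 0 by rfl, contDiff_zero]
      exact key_cont n (by omega)
    | succ j ih =>
      intro n hn
      have hd := key_deriv n (by omega)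
      have hcast : ((j + 1 : ℕ) : WithTop ℕ∞) = (j : ℕ) + 1 := by push_cast; rfl
      rw [hcast, contDiff_succ_iff_deriv]
      refine ⟨fun x => (hd x).differentiableAt, by simp, ?_⟩
      have : deriv (G n) = G (n + 1) := funext fun x => (hd x).deriv
      rw [this]
      exact ih (n + 1) (by omega)
  have := main m 0 (by omega)
  have hG0 : G 0 = fun x => if x ∈ Icc a b then f x else 0 := by
    funext x
    simp [hG, iteratedDerivWithin_zero]
  rwa [hG0] at this

/-- If `ψ` is a `C^m` torus-to-cube transformation, `h ∈ C^m([-1/2,1/2])`, and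
`g = √((ω∘ψ)·ψ')` has all derivatives up to order `m` continuous and vanishing at `±1/2`,
then the transformed function `f = (h∘ψ)·g` is `m`-times continuously differentiable on
`[-1/2,1/2]` with all derivatives up to order `m` vanishing at `±1/2`; in particular `f`
extends to an `m`-times continuously differentiable `1`-periodic function on the torus
(hence `f ∈ H^m(𝕋)`). -/
theorem statement14
    (m : ℕ) (ψ ψ' ω h g : ℝ → ℝ)
    (hψC : ContDiffOn ℝ m ψ (Icc (-(1/2) : ℝ) (1/2)))
    (hψmono : StrictMonoOn ψ (Icc (-(1/2) : ℝ) (1/2)))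
    (hψleft : ψ (-(1/2)) = -(1/2)) (hψright : ψ (1/2) = 1/2)
    (hψderiv : ∀ x ∈ Icc (-(1/2) : ℝ) (1/2),
      HasDerivWithinAt ψ (ψ' x) (Icc (-(1/2) : ℝ) (1/2)) x)
    (hhC : ContDiffOn ℝ m h (Icc (-(1/2) : ℝ) (1/2)))
    (hgdef : ∀ x ∈ Icc (-(1/2) : ℝ) (1/2), g x = Real.sqrt (ω (ψ x) * ψ' x))
    (hgC : ContDiffOn ℝ m g (Icc (-(1/2) : ℝ) (1/2)))
    (hg0 : ∀ n : ℕ, n ≤ m →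
      iteratedDerivWithin n g (Icc (-(1/2) : ℝ) (1/2)) (-(1/2)) = 0 ∧
      iteratedDerivWithin n g (Icc (-(1/2) : ℝ) (1/2)) (1/2) = 0) :
    ContDiffOn ℝ m (fun x => h (ψ x) * g x) (Icc (-(1/2) : ℝ) (1/2)) ∧
    (∀ n : ℕ, n ≤ m →
      iteratedDerivWithin n (fun x => h (ψ x) * g x) (Icc (-(1/2) : ℝ) (1/2)) (-(1/2)) = 0 ∧
      iteratedDerivWithin n (fun x => h (ψ x) * g x) (Icc (-(1/2) : ℝ) (1/2)) (1/2) = 0) ∧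
    (∃ F : ℝ → ℝ, ContDiff ℝ m F ∧ Function.Periodic F 1 ∧
      EqOn F (fun x => h (ψ x) * g x) (Icc (-(1/2) : ℝ) (1/2))) := by
  have hhalf : (-(1/2) : ℝ) < 1/2 := by norm_num
  have hI : UniqueDiffOn ℝ (Icc (-(1/2) : ℝ) (1/2)) := uniqueDiffOn_Icc hhalf
  have hma : (-(1/2) : ℝ) ∈ Icc (-(1/2) : ℝ) (1/2) := ⟨le_rfl, hhalf.le⟩
  have hmb : (1/2 : ℝ) ∈ Icc (-(1/2) : ℝ) (1/2) := ⟨hhalf.le, le_rfl⟩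
  have maps : MapsTo ψ (Icc (-(1/2) : ℝ) (1/2)) (Icc (-(1/2) : ℝ) (1/2)) := by
    intro x hx
    have hmono := hψmono.monotoneOn
    exact ⟨by rw [← hψleft]; exact hmono hma hx hx.1,
      by rw [← hψright]; exact hmono hx hmb hx.2⟩
  have hφ : ContDiffOn ℝ m (fun x => h (ψ x)) (Icc (-(1/2) : ℝ) (1/2)) :=
    hhC.comp hψC maps
  have part1 : ContDiffOn ℝ m (fun x => h (ψ x) * g x) (Icc (-(1/2) : ℝ) (1/2)) :=
    hφ.mul hgC
  have gza : g (-(1/2) : ℝ) = 0 := by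
    have := (hg0 0 (Nat.zero_le m)).1
    rwa [iteratedDerivWithin_zero] at this
  have gzb : g (1/2 : ℝ) = 0 := by
    have := (hg0 0 (Nat.zero_le m)).2
    rwa [iteratedDerivWithin_zero] at this
  have part2 : ∀ n : ℕ, n ≤ m →
      iteratedDerivWithin n (fun x => h (ψ x) * g x) (Icc (-(1/2) : ℝ) (1/2)) (-(1/2)) = 0 ∧
      iteratedDerivWithin n (fun x => h (ψ x) * g x) (Icc (-(1/2) : ℝ) (1/2)) (1/2) = 0 := by
    intro n hn
    constructor
    · rw [st14_leibniz hI _ g m hφ hgC n hn _ hma]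
      apply Finset.sum_eq_zero
      intro i _
      rw [(hg0 (n - i) (le_trans (Nat.sub_le n i) hn)).1, mul_zero, mul_zero]
    · rw [st14_leibniz hI _ g m hφ hgC n hn _ hmb]
      apply Finset.sum_eq_zero
      intro i _
      rw [(hg0 (n - i) (le_trans (Nat.sub_le n i) hn)).2, mul_zero, mul_zero]
  refine ⟨part1, part2, ?_⟩
  -- construction of the periodic extension
  set G : ℝ → ℝ :=
    fun x => if x ∈ Icc (-(1/2) : ℝ) (1/2) then h (ψ x) * g x else 0 with hGdef
  have hext : ContDiff ℝ m G := st14_extend hhalf m _ part1 part2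
  have Gz : ∀ y : ℝ, y ∉ Ioo (-(1/2) : ℝ) (1/2) → G y = 0 := by
    intro y hy
    by_cases hyI : y ∈ Icc (-(1/2) : ℝ) (1/2)
    · have : y = -(1/2) ∨ y = 1/2 := by
        rcases hyI with ⟨h1, h2⟩
        by_contra hcon
        push_neg at hcon
        exact hy ⟨lt_of_le_of_ne h1 (Ne.symm hcon.1), lt_of_le_of_ne h2 hcon.2⟩
      rcases this with hya | hyb
      · subst hya
        show (if (-(1/2):ℝ) ∈ Icc (-(1/2):ℝ) (1/2) then h (ψ (-(1/2))) * g (-(1/2)) else 0) = 0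
        rw [if_pos hyI, gza, mul_zero]
      · subst hyb
        show (if (1/2:ℝ) ∈ Icc (-(1/2):ℝ) (1/2) then h (ψ (1/2)) * g (1/2) else 0) = 0
        rw [if_pos hyI, gzb, mul_zero]
    · show (if y ∈ Icc (-(1/2):ℝ) (1/2) then h (ψ y) * g y else 0) = 0
      rw [if_neg hyI]
  have GzIcc : ∀ (x : ℝ) (i k : ℤ), i ≠ k → ((k : ℝ) ≤ x + 1/2) → (x + 1/2 < k + 1) →
      G (x - (i : ℝ)) = 0 := by
    intro x i k hik hk1 hk2
    apply Gz
    intro hmem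
    rcases lt_or_gt_of_ne hik with hik' | hik'
    · have : (i : ℝ) + 1 ≤ (k : ℝ) := by exact_mod_cast hik'
      have := hmem.2
      linarith
    · have : (k : ℝ) + 1 ≤ (i : ℝ) := by exact_mod_cast hik'
      have := hmem.1
      linarith
  refine ⟨fun x => G (x - (⌊x + 1/2⌋ : ℤ)), ?_, ?_, ?_⟩
  · -- smoothness
    rw [contDiff_iff_contDiffAt]
    intro x0
    set j : ℤ := ⌊x0 + 1/2⌋ with hj
    have hS : ContDiff ℝ m (fun x =>
        G (x - ((j : ℝ) - 1)) + G (x - (j : ℝ)) + G (x - ((j : ℝ) + 1))) := by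
      exact ((hext.comp (contDiff_id.sub contDiff_const)).add
        (hext.comp (contDiff_id.sub contDiff_const))).add
        (hext.comp (contDiff_id.sub contDiff_const))
    apply hS.contDiffAt.congr_of_eventuallyEq
    apply Filter.eventuallyEq_of_mem (Metric.ball_mem_nhds x0 (by norm_num : (0:ℝ) < 1/2))
    intro x hx
    rw [Metric.mem_ball, Real.dist_eq, abs_lt] at hx
    set k : ℤ := ⌊x + 1/2⌋ with hk
    have hk1 : (k : ℝ) ≤ x + 1/2 := Int.floor_le _
    have hk2 : x + 1/2 < k + 1 := Int.lt_floor_add_one _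
    have hj1 : (j : ℝ) ≤ x0 + 1/2 := Int.floor_le _
    have hj2 : x0 + 1/2 < j + 1 := Int.lt_floor_add_one _
    have hjk : k = j - 1 ∨ k = j ∨ k = j + 1 := by
      have h1 : (k : ℝ) < (j : ℝ) + 2 := by linarith [hx.1, hx.2]
      have h2 : (j : ℝ) < (k : ℝ) + 2 := by linarith [hx.1, hx.2]
      have h1' : k < j + 2 := by exact_mod_cast h1
      have h2' : j < k + 2 := by exact_mod_cast h2
      omega
    have e1 : x - ((j : ℝ) - 1) = x - ((j - 1 : ℤ) : ℝ) := by push_cast; ring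
    have e2 : x - ((j : ℝ) + 1) = x - ((j + 1 : ℤ) : ℝ) := by push_cast; ring
    show G (x - (k : ℝ)) = G (x - ((j : ℝ) - 1)) + G (x - (j : ℝ)) + G (x - ((j : ℝ) + 1))
    rcases hjk with hc | hc | hc
    · rw [e1, e2, GzIcc x j k (by omega) hk1 hk2,
        GzIcc x (j + 1) k (by omega) hk1 hk2, hc]
      push_cast
      ring
    · rw [e1, e2, GzIcc x (j - 1) k (by omega) hk1 hk2,
        GzIcc x (j + 1) k (by omega) hk1 hk2, hc]
      push_cast
      ring
    · rw [e1, e2, GzIcc x (j - 1) k (by omega) hk1 hk2,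
        GzIcc x j k (by omega) hk1 hk2, hc]
      push_cast
      ring
  · -- periodicity
    intro x
    have hfl : (⌊x + 1 + 1/2⌋ : ℤ) = ⌊x + 1/2⌋ + 1 := by
      rw [show x + 1 + 1/2 = x + 1/2 + 1 by ring, Int.floor_add_one]
    simp only [hfl]
    congr 1
    push_cast
    ring
  · -- equality on the interval
    intro x hx
    rcases lt_or_eq_of_le hx.2 with hxb | hxb
    · have hfl : (⌊x + 1/2⌋ : ℤ) = 0 := by
        rw [Int.floor_eq_zero_iff]
        constructor
        · linarith [hx.1]
        · linarith
      simp only [hfl, Int.cast_zero, sub_zero]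
      show (if x ∈ Icc (-(1/2):ℝ) (1/2) then h (ψ x) * g x else 0) = h (ψ x) * g x
      rw [if_pos hx]
    · have hfl : (⌊x + 1/2⌋ : ℤ) = 1 := by
        rw [hxb]
        norm_num
      have hGz : G (x - 1) = 0 := by
        apply Gz
        intro hmem
        rw [hxb] at hmem
        have := hmem.1
        norm_num at this
      simp only [hfl, Int.cast_one]
      rw [hGz, hxb, gzb, mul_zero]
end
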